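/- arXiv:1512.07285 — 2 statements merged into one kernel-verified Lean document; each statement's English description precedes it below -/
import Mathlib

section
/- Let G be a locally compact, second-countable, Hausdorff topological group with left Haar measure μ, let H ≤ G be a closed subgroup with left Haar measure ν, and let E ⊆ G be a measurable set with μ(G \ E) = 0. Then for μ-almost every g ∈ G, one has gh ∈ E for ν-almost every h ∈ H; in particular, for μ-almost every g ∈ E, the set {h ∈ H : gh ∉ E} is ν-null. -/
open MeasureTheory

/-- Fubini-type lemma: if `E` has full Haar measure in `G` and `H` is a closed subgroup
with left Haar measure `ν`, then for `μ`-almost every `g ∈ G` one has `g * h ∈ E` for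
`ν`-almost every `h ∈ H`. -/
theorem ae_translate_mem_of_full_measure
    {G : Type*} [Group G] [TopologicalSpace G] [IsTopologicalGroup G]
    [LocallyCompactSpace G] [SecondCountableTopology G] [T2Space G]
    [MeasurableSpace G] [BorelSpace G]
    (μ : Measure G) [μ.IsHaarMeasure]
    (H : Subgroup G) (hH : IsClosed (H : Set G))
    [MeasurableSpace ↥H] [BorelSpace ↥H]
    (ν : Measure ↥H) [ν.IsHaarMeasure]
    (E : Set G) (hE : MeasurableSet E) (hfull : μ Eᶜ = 0) :
    (∀ᵐ g ∂μ, ∀ᵐ (h : ↥H) ∂ν, g * (h : G) ∈ E) ∧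
      ∀ᵐ g ∂μ, g ∈ E → ν {h : ↥H | g * (h : G) ∉ E} = 0 := by
  haveI : LocallyCompactSpace ↥H := hH.locallyCompactSpace
  haveI : SigmaFinite μ := by infer_instance
  haveI : SecondCountableTopology ↥H := TopologicalSpace.secondCountableTopology_induced ↥H G (↑)
  haveI : IsLocallyFiniteMeasure ν := by infer_instance
  haveI : SigmaFinite ν := by infer_instance
  have hmeas : Measurable fun p : G × ↥H => p.1 * (p.2 : G) :=
    measurable_fst.mul (continuous_subtype_val.measurable.comp measurable_snd)
  set S : Set (G × ↥H) := (fun p : G × ↥H => p.1 * (p.2 : G)) ⁻¹' Eᶜ with hS_def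
  have hSmeas : MeasurableSet S := hmeas hE.compl
  have hSnull : (μ.prod ν) S = 0 := by
    rw [Measure.prod_apply_symm hSmeas]
    have : ∀ h : ↥H, μ ((fun g : G => (g, h)) ⁻¹' S) = 0 := by
      intro h
      have : ((fun g : G => (g, h)) ⁻¹' S) = (fun g : G => g * (h : G)) ⁻¹' Eᶜ := rfl
      rw [this, measure_mul_right_null]
      exact hfull
    simp [this]
  have hmain : ∀ᵐ g ∂μ, ∀ᵐ (h : ↥H) ∂ν, g * (h : G) ∈ E := by
    have : ∀ᵐ p ∂μ.prod ν, p ∉ S := by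
      rw [ae_iff]
      simpa using hSnull
    filter_upwards [Measure.ae_ae_of_ae_prod this] with g hg
    filter_upwards [hg] with h hh
    simpa [hS_def] using hh
  refine ⟨hmain, ?_⟩
  filter_upwards [hmain] with g hg _
  rw [ae_iff] at hg
  simpa using hg
end

section
/- Let d ≥ 2, let U ⊆ ℝ^d be a nonempty open connected set, and let φ : U → ℝ^d be continuously differentiable. Suppose that for every v ∈ U the (Fréchet) derivative of φ at v is a scalar multiple of the identity, i.e. there is f(v) ∈ ℝ with Dφ(v) = f(v)·Id. Then f is constant on U and φ is affine: there exist c ∈ ℝ and b ∈ ℝ^d such that φ(v) = c·v + b for all v ∈ U. -/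
set_option maxHeartbeats 1000000

open Metric Set

private lemma const_of_locally_const' {X α : Type*} [TopologicalSpace X] {U : Set X}
    (hU : IsPreconnected U) {g : X → α}
    (hloc : ∀ v ∈ U, ∃ V : Set X, IsOpen V ∧ v ∈ V ∧ V ⊆ U ∧ ∀ w ∈ V, g w = g v)
    {v₀ : X} (hv₀ : v₀ ∈ U) : ∀ v ∈ U, g v = g v₀ := by
  choose V hVopen hmem hVU hVconst using hloc
  set A : Set X := ⋃ (v : X) (h : v ∈ U) (_ : g v = g v₀), V v h with hA
  set B : Set X := ⋃ (v : X) (h : v ∈ U) (_ : g v ≠ g v₀), V v h with hB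
  have hAopen : IsOpen A :=
    isOpen_iUnion fun v => isOpen_iUnion fun h => isOpen_iUnion fun _ => hVopen v h
  have hBopen : IsOpen B :=
    isOpen_iUnion fun v => isOpen_iUnion fun h => isOpen_iUnion fun _ => hVopen v h
  have hdisj : Disjoint A B := by
    rw [Set.disjoint_left]
    rintro z hzA hzB
    simp only [hA, hB, mem_iUnion] at hzA hzB
    obtain ⟨u, hu, hgu, hz⟩ := hzA
    obtain ⟨u', hu', hgu', hz'⟩ := hzB
    exact hgu' ((hVconst u' hu' z hz').symm.trans ((hVconst u hu z hz).trans hgu))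
  have hsub : U ⊆ A ∪ B := by
    intro v hv
    by_cases h : g v = g v₀
    · exact Or.inl (mem_iUnion.2 ⟨v, mem_iUnion.2 ⟨hv, mem_iUnion.2 ⟨h, hmem v hv⟩⟩⟩)
    · exact Or.inr (mem_iUnion.2 ⟨v, mem_iUnion.2 ⟨hv, mem_iUnion.2 ⟨h, hmem v hv⟩⟩⟩)
  have hne : (U ∩ A).Nonempty :=
    ⟨v₀, hv₀, mem_iUnion.2 ⟨v₀, mem_iUnion.2 ⟨hv₀, mem_iUnion.2 ⟨rfl, hmem v₀ hv₀⟩⟩⟩⟩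
  have hUA := hU.subset_left_of_subset_union hAopen hBopen hdisj hsub hne
  intro v hv
  have := hUA hv
  simp only [hA, mem_iUnion] at this
  obtain ⟨u, hu, hgu, hz⟩ := this
  exact (hVconst u hu v hz).trans hgu

private lemma key_step {d : ℕ} {U : Set (EuclideanSpace ℝ (Fin d))}
    {φ : EuclideanSpace ℝ (Fin d) → EuclideanSpace ℝ (Fin d)}
    {f : EuclideanSpace ℝ (Fin d) → ℝ}
    (hdiff : ∀ v ∈ U, HasFDerivAt φ
      (f v • ContinuousLinearMap.id ℝ (EuclideanSpace ℝ (Fin d))) v)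
    {x : EuclideanSpace ℝ (Fin d)} {r : ℝ}
    (hball : Metric.ball x r ⊆ U)
    {e : EuclideanSpace ℝ (Fin d)} (he : ‖e‖ = 1)
    {w : EuclideanSpace ℝ (Fin d)} (hw : ‖w‖ < r / 4) :
    f (x + w) = f (x + (inner ℝ e w : ℝ) • e) := by
  have hr : 0 < r := by nlinarith [norm_nonneg w]
  set T : EuclideanSpace ℝ (Fin d) →L[ℝ] ℝ := innerSL ℝ e with hT
  set g : EuclideanSpace ℝ (Fin d) → ℝ := fun z => T (φ z) with hgdef
  have hee : (inner ℝ e e : ℝ) = 1 := by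
    rw [real_inner_self_eq_norm_mul_norm, he]; ring
  have hgder : ∀ v ∈ U, HasFDerivAt g (f v • T) v := by
    intro v hv
    have h := T.hasFDerivAt.comp v (hdiff v hv)
    have hTc : (f v • T) = T.comp (f v • ContinuousLinearMap.id ℝ (EuclideanSpace ℝ (Fin d))) := by
      ext u
      rw [ContinuousLinearMap.smul_apply, ContinuousLinearMap.comp_apply,
        ContinuousLinearMap.smul_apply, ContinuousLinearMap.id_apply, map_smul]
    rw [hTc]
    exact h
  set a : ℝ := (inner ℝ e w : ℝ) with hadef
  set w' : EuclideanSpace ℝ (Fin d) := w - a • e with hw'def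
  have ha : |a| < r / 4 :=
    lt_of_le_of_lt (by simpa [he] using abs_real_inner_le_norm e w) hw
  have hip : (inner ℝ e w' : ℝ) = 0 := by
    rw [hw'def, inner_sub_right, real_inner_smul_right, hee, mul_one, hadef, sub_self]
  have hw' : ‖w'‖ < r / 2 := by
    have h1 : ‖w'‖ ≤ ‖w‖ + ‖a • e‖ := norm_sub_le _ _
    have h2 : ‖a • e‖ = |a| := by rw [norm_smul, he, mul_one, Real.norm_eq_abs]
    linarith
  -- constancy of g along w' inside the ball
  have slice : ∀ z : EuclideanSpace ℝ (Fin d),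
      (∀ t ∈ Icc (0:ℝ) 1, z + t • w' ∈ Metric.ball x r) → g (z + w') = g z := by
    intro z hz
    have hD : ∀ t ∈ Icc (0:ℝ) 1,
        HasDerivWithinAt (fun t : ℝ => g (z + t • w')) 0 (Icc (0:ℝ) 1) t := by
      intro t ht
      have hline : HasDerivAt (fun t : ℝ => z + t • w') w' t := by
        simpa using ((hasDerivAt_id t).smul_const w').const_add z
      have hcomp := (hgder _ (hball (hz t ht))).comp_hasDerivAt t hline
      have hTw : T w' = (inner ℝ e w' : ℝ) := rfl
      have h0 : (f (z + t • w') • T) w' = 0 := by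
        rw [ContinuousLinearMap.smul_apply, hTw, hip, smul_zero]
      rw [h0] at hcomp
      exact hcomp.hasDerivWithinAt
    have hbnd := Convex.norm_image_sub_le_of_norm_hasDerivWithin_le (C := 0) hD
      (fun t _ => by simp) (convex_Icc (0:ℝ) 1)
      (Set.left_mem_Icc.2 zero_le_one) (Set.right_mem_Icc.2 zero_le_one)
    have h1 : ‖g (z + w') - g z‖ ≤ 0 := by simpa using hbnd
    exact sub_eq_zero.1 (norm_le_zero_iff.1 h1)
  -- derivative of s ↦ g (x + w + s • e) at 0 is f (x + w)
  have hxw : x + w ∈ U := hball (by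
    rw [Metric.mem_ball, dist_eq_norm]
    have : x + w - x = w := by abel
    rw [this]; linarith)
  have hxa : x + a • e ∈ U := hball (by
    rw [Metric.mem_ball, dist_eq_norm]
    have h1 : x + a • e - x = a • e := by abel
    have h2 : ‖a • e‖ = |a| := by rw [norm_smul, he, mul_one, Real.norm_eq_abs]
    rw [h1, h2]; linarith)
  have hF1 : HasDerivAt (fun s : ℝ => g (x + w + s • e)) (f (x + w)) 0 := by
    have hline : HasDerivAt (fun s : ℝ => x + w + s • e) e 0 := by
      simpa using ((hasDerivAt_id (0:ℝ)).smul_const e).const_add (x + w)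
    have hmem : x + w + (0:ℝ) • e ∈ U := by simpa using hxw
    have hcomp := (hgder _ hmem).comp_hasDerivAt 0 hline
    have hTe : T e = (inner ℝ e e : ℝ) := rfl
    have h0 : (f (x + w + (0:ℝ) • e) • T) e = f (x + w) := by
      rw [ContinuousLinearMap.smul_apply, hTe, hee, smul_eq_mul, mul_one]
      norm_num
    rwa [h0] at hcomp
  have hF2 : HasDerivAt (fun s : ℝ => g (x + a • e + s • e)) (f (x + a • e)) 0 := by
    have hline : HasDerivAt (fun s : ℝ => x + a • e + s • e) e 0 := by
      simpa using ((hasDerivAt_id (0:ℝ)).smul_const e).const_add (x + a • e)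
    have hmem : x + a • e + (0:ℝ) • e ∈ U := by simpa using hxa
    have hcomp := (hgder _ hmem).comp_hasDerivAt 0 hline
    have hTe : T e = (inner ℝ e e : ℝ) := rfl
    have h0 : (f (x + a • e + (0:ℝ) • e) • T) e = f (x + a • e) := by
      rw [ContinuousLinearMap.smul_apply, hTe, hee, smul_eq_mul, mul_one]
      norm_num
    rwa [h0] at hcomp
  have heq : (fun s : ℝ => g (x + w + s • e)) =ᶠ[nhds (0:ℝ)]
      (fun s : ℝ => g (x + a • e + s • e)) := by
    filter_upwards [Metric.ball_mem_nhds (0:ℝ) (by positivity : (0:ℝ) < r/4)] with s hs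
    have hsr : |s| < r / 4 := by simpa [Real.dist_eq] using hs
    have hrw : x + w + s • e = (x + a • e + s • e) + w' := by
      rw [hw'def]; abel
    rw [hrw]
    refine slice (x + a • e + s • e) (fun t ht => ?_)
    rw [Metric.mem_ball, dist_eq_norm]
    have h1 : x + a • e + s • e + t • w' - x = a • e + s • e + t • w' := by abel
    rw [h1]
    have h2 : ‖a • e + s • e + t • w'‖ ≤ ‖a • e‖ + ‖s • e‖ + ‖t • w'‖ := norm_add₃_le
    have h3 : ‖a • e‖ = |a| := by rw [norm_smul, he, mul_one, Real.norm_eq_abs]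
    have h4 : ‖s • e‖ = |s| := by rw [norm_smul, he, mul_one, Real.norm_eq_abs]
    have h5 : ‖t • w'‖ = |t| * ‖w'‖ := by rw [norm_smul, Real.norm_eq_abs]
    have ht1 : |t| ≤ 1 := abs_le.2 ⟨by linarith [ht.1], ht.2⟩
    nlinarith [norm_nonneg w', abs_nonneg t]
  exact hF1.unique (hF2.congr_of_eventuallyEq heq)

/-- If `φ` is `C¹` on a nonempty open connected set `U ⊆ ℝ^d` (`d ≥ 2`) and at every point
of `U` its derivative is the scalar `f v` times the identity, then `f` is constant on `U`
and `φ` is affine on `U`: `φ v = c • v + b`. -/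
theorem affine_of_fderiv_smul_id (d : ℕ) (hd : 2 ≤ d)
    (U : Set (EuclideanSpace ℝ (Fin d))) (hUopen : IsOpen U) (hUne : U.Nonempty)
    (hUconn : IsConnected U)
    (φ : EuclideanSpace ℝ (Fin d) → EuclideanSpace ℝ (Fin d))
    (hφ : ContDiffOn ℝ 1 φ U)
    (f : EuclideanSpace ℝ (Fin d) → ℝ)
    (hder : ∀ v ∈ U, fderiv ℝ φ v
      = f v • ContinuousLinearMap.id ℝ (EuclideanSpace ℝ (Fin d))) :
    ∃ (c : ℝ) (b : EuclideanSpace ℝ (Fin d)),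
      (∀ v ∈ U, f v = c) ∧ ∀ v ∈ U, φ v = c • v + b := by
  classical
  have hdiff : ∀ v ∈ U, HasFDerivAt φ
      (f v • ContinuousLinearMap.id ℝ (EuclideanSpace ℝ (Fin d))) v := by
    intro v hv
    have h1 : DifferentiableAt ℝ φ v :=
      (hφ.differentiableOn one_ne_zero).differentiableAt (hUopen.mem_nhds hv)
    have h2 := h1.hasFDerivAt
    rwa [hder v hv] at h2
  have h0d : (0:ℕ) < d := by omega
  have h1d : (1:ℕ) < d := by omega
  set e₁ : EuclideanSpace ℝ (Fin d) := EuclideanSpace.single ⟨0, h0d⟩ 1 with he₁def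
  set e₂ : EuclideanSpace ℝ (Fin d) := EuclideanSpace.single ⟨1, h1d⟩ 1 with he₂def
  have he₁ : ‖e₁‖ = 1 := by simp [he₁def]
  have he₂ : ‖e₂‖ = 1 := by simp [he₂def]
  have h21 : (inner ℝ e₂ e₁ : ℝ) = 0 := by
    rw [he₁def, he₂def, EuclideanSpace.inner_single_left]
    simp [EuclideanSpace.single_apply]
  have hlocf : ∀ v ∈ U, ∃ V, IsOpen V ∧ v ∈ V ∧ V ⊆ U ∧ ∀ w ∈ V, f w = f v := by
    intro v hv
    obtain ⟨r, hr, hball⟩ := Metric.isOpen_iff.1 hUopen v hv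
    refine ⟨Metric.ball v (r/4), Metric.isOpen_ball,
      Metric.mem_ball_self (by positivity),
      fun y hy => hball (Metric.ball_subset_ball (by linarith) hy), ?_⟩
    intro y hy
    have hu : ‖y - v‖ < r / 4 := by
      rw [← dist_eq_norm]; exact Metric.mem_ball.1 hy
    have k1 := key_step hdiff hball he₁ hu
    set a : ℝ := (inner ℝ e₁ (y - v) : ℝ) with hadef
    have haa : ‖a • e₁‖ < r / 4 := by
      rw [norm_smul, he₁, mul_one, Real.norm_eq_abs]
      exact lt_of_le_of_lt (by simpa [he₁] using abs_real_inner_le_norm e₁ (y - v)) hu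
    have k2 := key_step hdiff hball he₂ haa
    have hz : (inner ℝ e₂ (a • e₁) : ℝ) = 0 := by
      rw [real_inner_smul_right, h21, mul_zero]
    rw [hz, zero_smul, add_zero] at k2
    have hy' : v + (y - v) = y := by abel
    rw [hy'] at k1
    exact k1.trans k2
  obtain ⟨v₀, hv₀⟩ := hUne
  have hfconst := const_of_locally_const' hUconn.isPreconnected hlocf hv₀
  set c : ℝ := f v₀ with hcdef
  have hψder : ∀ v ∈ U, HasFDerivAt (fun z => φ z - c • z)
      (0 : EuclideanSpace ℝ (Fin d) →L[ℝ] EuclideanSpace ℝ (Fin d)) v := by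
    intro v hv
    have h1 := hdiff v hv
    rw [hfconst v hv] at h1
    have h2 : HasFDerivAt (fun z : EuclideanSpace ℝ (Fin d) => c • z)
        (c • ContinuousLinearMap.id ℝ (EuclideanSpace ℝ (Fin d))) v :=
      (hasFDerivAt_id v).const_smul c
    have h3 := h1.sub h2
    rwa [sub_self] at h3
  have hlocψ : ∀ v ∈ U, ∃ V, IsOpen V ∧ v ∈ V ∧ V ⊆ U ∧
      ∀ w ∈ V, (fun z => φ z - c • z) w = (fun z => φ z - c • z) v := by
    intro v hv
    obtain ⟨r, hr, hball⟩ := Metric.isOpen_iff.1 hUopen v hv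
    refine ⟨Metric.ball v r, Metric.isOpen_ball, Metric.mem_ball_self hr, hball,
      fun y hy => ?_⟩
    have hbnd := (convex_ball v r).norm_image_sub_le_of_norm_hasFDerivWithin_le (C := 0)
      (fun z hz => (hψder z (hball hz)).hasFDerivWithinAt)
      (fun z _ => le_of_eq norm_zero) (Metric.mem_ball_self hr) hy
    have h0 : ‖(φ y - c • y) - (φ v - c • v)‖ ≤ 0 := by simpa using hbnd
    exact sub_eq_zero.1 (norm_le_zero_iff.1 h0)
  have hψconst := const_of_locally_const' hUconn.isPreconnected hlocψ hv₀
  refine ⟨c, φ v₀ - c • v₀, hfconst, fun v hv => ?_⟩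
  exact sub_eq_iff_eq_add'.1 (hψconst v hv)
end
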